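/- Let P(X) = Xⁿ + a₁Xⁿ⁻¹ + ⋯ + aₙ ∈ ℤ[X] be a monic irreducible polynomial of degree n ≥ 1 all of whose complex roots are real and have absolute value strictly less than 2. Then there exists an integer N ≥ 3 such that zⁿ · P(z + 1/z) = Φ_N(z) for every nonzero z ∈ ℂ (so Xⁿ·P(X + 1/X) equals the N-th cyclotomic polynomial), and every root of P is of the form ζ + ζ⁻¹ = 2cos(2mπ/N) for some primitive N-th root of unity ζ (i.e., some integer m with 1 ≤ m < N and gcd(m, N) = 1). Moreover, the maximal absolute value of the roots of P equals 2cos(2π/N) if N is even and 2cos(π/N) if N is odd. -/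

import Mathlib

open Polynomial Real

open scoped IntermediateField
set_option maxHeartbeats 1000000
set_option synthInstance.maxHeartbeats 400000

private noncomputable def QQaux (n : ℕ) (P : Polynomial ℤ) : Polynomial ℤ :=
  (X ^ 2 + 1) ^ n + ∑ k ∈ Finset.range n, C (P.coeff k) * X ^ (n - k) * (X ^ 2 + 1) ^ k

private lemma QQaux_deg1 (n : ℕ) : degree (((X:Polynomial ℤ) ^ 2 + 1) ^ n) = (2 * n : ℕ) := by
  have h2 : degree ((X:Polynomial ℤ) ^ 2 + 1) = 2 := by
    have h := degree_X_pow_add_C (R := ℤ) (n := 2) (by norm_num) 1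
    simp only [map_one] at h
    exact_mod_cast h
  rw [degree_pow, h2]
  simp [Nat.smul_one_eq_cast, mul_comm]

private lemma QQaux_sum_deg (n : ℕ) (P : Polynomial ℤ) :
    degree (∑ k ∈ Finset.range n, C (P.coeff k) * X ^ (n - k) * (X ^ 2 + 1) ^ k)
      < ((2 * n : ℕ) : WithBot ℕ) := by
  apply lt_of_le_of_lt (degree_sum_le _ _)
  rw [Finset.sup_lt_iff (by exact_mod_cast WithBot.bot_lt_coe _)]
  intro k hk
  rw [Finset.mem_range] at hk
  have h1 : degree (C (P.coeff k) * X ^ (n - k) * (X ^ 2 + 1) ^ k : Polynomial ℤ)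
      ≤ ((n - k : ℕ) : WithBot ℕ) + ((2 * k : ℕ) : WithBot ℕ) := by
    apply le_trans (degree_mul_le _ _)
    apply add_le_add
    · apply le_trans (degree_mul_le _ _)
      exact le_trans (add_le_add degree_C_le (degree_X_pow_le _)) (by simp)
    · exact le_of_eq (QQaux_deg1 k)
  apply lt_of_le_of_lt h1
  rw [← Nat.cast_add]
  exact_mod_cast (by omega : n - k + 2 * k < 2 * n)

private lemma QQaux_monic (n : ℕ) (P : Polynomial ℤ) : (QQaux n P).Monic := by
  have hm : (((X:Polynomial ℤ) ^ 2 + 1) ^ n).Monic := by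
    have : ((X:Polynomial ℤ) ^ 2 + 1) = X ^ 2 + C 1 := by simp
    rw [this]
    exact (monic_X_pow_add_C (1:ℤ) (by norm_num)).pow n
  apply hm.add_of_left
  rw [QQaux_deg1]
  exact QQaux_sum_deg n P

private lemma QQaux_natDegree (n : ℕ) (P : Polynomial ℤ) : (QQaux n P).natDegree = 2 * n := by
  have h : (QQaux n P).degree = (2 * n : ℕ) := by
    rw [QQaux, degree_add_eq_left_of_degree_lt, QQaux_deg1]
    rw [QQaux_deg1]; exact QQaux_sum_deg n P
  exact natDegree_eq_of_degree_eq_some h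

private lemma QQaux_aeval (n : ℕ) (P : Polynomial ℤ) (hP : P.natDegree = n) (hm : P.Monic)
    (z : ℂ) (hz : z ≠ 0) : aeval z (QQaux n P) = z ^ n * aeval (z + z⁻¹) P := by
  have key : ∀ k ≤ n, (z + z⁻¹) ^ k * z ^ n = z ^ (n - k) * (z ^ 2 + 1) ^ k := by
    intro k hk
    have h1 : (z + z⁻¹) * z = z ^ 2 + 1 := by field_simp
    calc (z + z⁻¹) ^ k * z ^ n = ((z + z⁻¹) * z) ^ k * z ^ (n - k) := by
          rw [mul_pow, mul_assoc, ← pow_add]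
          congr 2
          omega
      _ = z ^ (n - k) * (z ^ 2 + 1) ^ k := by rw [h1]; ring
  rw [aeval_eq_sum_range (p := P) (z + z⁻¹), hP, Finset.mul_sum, Finset.sum_range_succ]
  simp only [QQaux, map_add, map_sum, map_pow, map_mul, aeval_X, aeval_C, map_one, aeval_one]
  rw [add_comm ((z^2+1)^n)]
  congr 1
  · apply Finset.sum_congr rfl
    intro k hk
    rw [Finset.mem_range] at hk
    simp only [zsmul_eq_mul, algebraMap_int_eq, eq_intCast]
    rw [mul_assoc, ← key k hk.le]
    ring
  · rw [← hP, hm.coeff_natDegree, one_smul, hP, mul_comm, key n le_rfl, Nat.sub_self, pow_zero,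
      one_mul]

private lemma quad_root_shape (α ζ : ℂ) (hα : α.im = 0) (habs : ‖α‖ < 2)
    (hζ : ζ ^ 2 - α * ζ + 1 = 0) : ‖ζ‖ = 1 ∧ ζ.im ≠ 0 := by
  have hαr : (α.re : ℂ) = α := Complex.ext (by simp) (by simp [hα])
  have him : ζ.im ≠ 0 := by
    intro h0
    have hζr : (ζ.re : ℂ) = ζ := Complex.ext (by simp) (by simp [h0])
    set a := α.re
    set r := ζ.re
    have ha : |a| < 2 := by rwa [← Real.norm_eq_abs, ← Complex.norm_real, hαr]
    have hr : r ^ 2 - a * r + 1 = 0 := by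
      have : ((r ^ 2 - a * r + 1 : ℝ) : ℂ) = 0 := by push_cast [hζr, hαr]; exact hζ
      exact_mod_cast this
    rw [abs_lt] at ha
    rcases lt_trichotomy r 0 with h | h | h
    · nlinarith [sq_nonneg (r + 1)]
    · simp [h] at hr
    · nlinarith [sq_nonneg (r - 1)]
  refine ⟨?_, him⟩
  have hconj : (starRingEnd ℂ) ζ ^ 2 - α * (starRingEnd ℂ) ζ + 1 = 0 := by
    have := congrArg (starRingEnd ℂ) hζ
    simpa [map_sub, map_add, map_mul, map_pow, Complex.conj_eq_iff_im.mpr hα] using this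
  have hfac : ((starRingEnd ℂ) ζ - ζ) * ((starRingEnd ℂ) ζ - (α - ζ)) = 0 := by
    have h1 : α * ζ - ζ ^ 2 = 1 := by linear_combination -hζ
    linear_combination hconj + h1
  have hne : (starRingEnd ℂ) ζ - ζ ≠ 0 := by
    intro h
    apply him
    have : (starRingEnd ℂ) ζ = ζ := by linear_combination h
    have := Complex.conj_eq_iff_im.mp this
    exact this
  have hprod : ζ * (starRingEnd ℂ) ζ = 1 := by
    have h2 : (starRingEnd ℂ) ζ = α - ζ := by
      rcases mul_eq_zero.mp hfac with h | h
      · exact absurd (by linear_combination h) hne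
      · linear_combination h
    calc ζ * (starRingEnd ℂ) ζ = α * ζ - ζ ^ 2 := by rw [h2]; ring
      _ = 1 := by linear_combination -hζ
  have : (Complex.normSq ζ : ℂ) = 1 := by rw [← Complex.mul_conj]; exact hprod
  have hns : Complex.normSq ζ = 1 := by exact_mod_cast this
  rw [← Complex.sq_norm] at hns
  nlinarith [norm_nonneg ζ]

private lemma kronecker_aux (Q : Polynomial ℤ) (hQm : Q.Monic)
    (habs : ∀ z : ℂ, aeval z Q = 0 → ‖z‖ = 1)
    (ζ : ℂ) (hζ : aeval ζ Q = 0) : 0 < orderOf ζ ∧ IsPrimitiveRoot ζ (orderOf ζ) := by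
  have hζint : IsIntegral ℤ ζ := ⟨Q, hQm, by rwa [← aeval_def]⟩
  have hζintQ : IsIntegral ℚ ζ := hζint.tower_top
  let K : IntermediateField ℚ ℂ := ℚ⟮ζ⟯
  haveI : FiniteDimensional ℚ K := IntermediateField.adjoin.finiteDimensional hζintQ
  haveI : NumberField K := ⟨⟩
  set x : K := IntermediateField.AdjoinSimple.gen ℚ ζ with hx
  have hxζ : (algebraMap K ℂ) x = ζ := rfl
  have hxint : IsIntegral ℤ x := by
    rwa [← isIntegral_algebraMap_iff (algebraMap K ℂ).injective, hxζ]
  have hmd : minpoly ℚ ζ ∣ Q.map (algebraMap ℤ ℚ) := by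
    apply minpoly.dvd
    rwa [aeval_map_algebraMap]
  have hnorm : ∀ φ : K →+* ℂ, ‖φ x‖ = 1 := by
    intro φ
    have hroot : aeval (φ x) (minpoly ℚ x) = 0 := by
      rw [show φ x = φ.toRatAlgHom x from rfl, aeval_algHom_apply, minpoly.aeval, map_zero]
    erw [IntermediateField.minpoly_gen ℚ ζ] at hroot
    obtain ⟨c, hc⟩ := hmd
    have : aeval (φ x) (Q.map (algebraMap ℤ ℚ)) = 0 := by
      rw [hc, map_mul, hroot, zero_mul]
    rw [aeval_map_algebraMap] at this
    exact habs _ this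
  obtain ⟨m, hm0, hm⟩ := NumberField.Embeddings.pow_eq_one_of_norm_eq_one K ℂ hxint hnorm
  have hζm : ζ ^ m = 1 := by
    have := congrArg (algebraMap K ℂ) hm
    rw [map_pow, hxζ, map_one] at this
    exact this
  have hfin : IsOfFinOrder ζ := isOfFinOrder_iff_pow_eq_one.mpr ⟨m, hm0, hζm⟩
  exact ⟨hfin.orderOf_pos, IsPrimitiveRoot.orderOf ζ⟩

private noncomputable def realIF : IntermediateField ℚ ℂ :=
  Subfield.toIntermediateField (Complex.ofRealHom.fieldRange) (fun x => ⟨(x : ℝ), by simp⟩)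

private lemma mem_realIF {z : ℂ} (h : z.im = 0) : z ∈ realIF :=
  ⟨z.re, Complex.ext (by simp) (by simp [h])⟩

private lemma realIF_im {z : ℂ} (h : z ∈ realIF) : z.im = 0 := by
  obtain ⟨r, hr⟩ := h
  rw [← hr]
  simp

private lemma finrank_two_aux (E : IntermediateField ℚ ℂ) (hE : ∀ x ∈ E, Complex.im x = 0)
    (α ζ : ℂ) (hαE : α ∈ E) (hζim : ζ.im ≠ 0) (hquad : ζ ^ 2 - α * ζ + 1 = 0) :
    Module.finrank E E⟮ζ⟯ = 2 := by
  set a : ↥E := ⟨α, hαE⟩ with ha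
  set q : Polynomial ↥E := X ^ 2 + (C (-a) * X + C 1) with hq
  have hqm : q.Monic := monic_X_pow_add (by apply lt_of_le_of_lt (degree_linear_le); norm_num)
  have hqe : aeval ζ q = 0 := by
    simp only [hq, map_add, map_mul, map_pow, aeval_X, aeval_C, map_one, map_neg]
    have hcoe : (algebraMap ↥E ℂ) a = α := rfl
    rw [hcoe]
    linear_combination hquad
  have hζint : IsIntegral ↥E ζ := ⟨q, hqm, by rwa [← aeval_def]⟩
  rw [IntermediateField.adjoin.finrank hζint]
  have hdvd : minpoly ↥E ζ ∣ q := minpoly.dvd _ _ hqe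
  have hqd : q.natDegree = 2 := by
    unfold q
    compute_degree!
  have hle : (minpoly ↥E ζ).natDegree ≤ 2 := hqd ▸ natDegree_le_of_dvd hdvd hqm.ne_zero
  have hpos : 0 < (minpoly ↥E ζ).natDegree := minpoly.natDegree_pos hζint
  have hne1 : (minpoly ↥E ζ).natDegree ≠ 1 := by
    intro h1
    have hmono := minpoly.monic hζint
    have heq := hmono.eq_X_add_C h1
    have := minpoly.aeval ↥E ζ
    rw [heq] at this
    simp only [map_add, aeval_X, aeval_C] at this
    have hζeq : ζ = -((algebraMap ↥E ℂ) ((minpoly ↥E ζ).coeff 0)) := by linear_combination this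
    apply hζim
    rw [hζeq]
    have : ((minpoly ↥E ζ).coeff 0 : ℂ).im = 0 := hE _ ((minpoly ↥E ζ).coeff 0).2
    simpa [Complex.neg_im] using this
  omega

private lemma tower_aux (α ζ : ℂ) (hne : ζ ≠ 0) (hα : α = ζ + ζ⁻¹)
    (hαint : IsIntegral ℚ α) (hζint : IsIntegral ℚ ζ)
    (h2 : Module.finrank ↥(ℚ⟮α⟯) ↥(ℚ⟮α⟯⟮ζ⟯) = 2) :
    (minpoly ℚ ζ).natDegree = 2 * (minpoly ℚ α).natDegree := by
  have hres : (ℚ⟮α⟯⟮ζ⟯).restrictScalars ℚ = ℚ⟮ζ⟯ := by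
    erw [IntermediateField.adjoin_simple_adjoin_simple]
    apply le_antisymm
    · rw [IntermediateField.adjoin_le_iff]
      apply Set.insert_subset_iff.mpr
      constructor
      · rw [hα]
        exact add_mem (IntermediateField.mem_adjoin_simple_self ℚ ζ)
          (inv_mem (IntermediateField.mem_adjoin_simple_self ℚ ζ))
      · exact Set.singleton_subset_iff.mpr (IntermediateField.mem_adjoin_simple_self ℚ ζ)
    · exact IntermediateField.adjoin.mono ℚ _ _ (by simp)
  have hmul := Module.finrank_mul_finrank ℚ ↥(ℚ⟮α⟯) ↥(ℚ⟮α⟯⟮ζ⟯)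
  have hfr : Module.finrank ℚ ↥(ℚ⟮α⟯⟮ζ⟯) = Module.finrank ℚ ↥(ℚ⟮ζ⟯) := by
    rw [show Module.finrank ℚ ↥(ℚ⟮α⟯⟮ζ⟯) =
        Module.finrank ℚ ↥((ℚ⟮α⟯⟮ζ⟯).restrictScalars ℚ) from rfl, hres]
  rw [h2, hfr, IntermediateField.adjoin.finrank hζint, IntermediateField.adjoin.finrank hαint]
    at hmul
  omega

private lemma aux_cos1 (δ θ : ℝ) (h0 : 0 ≤ δ) (h1 : δ ≤ θ) (h2 : θ ≤ π - δ) :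
    |Real.cos θ| ≤ Real.cos δ := by
  rw [abs_le]
  constructor
  · have := Real.cos_le_cos_of_nonneg_of_le_pi (x := θ) (y := π - δ) (by linarith) (by linarith) h2
    rw [Real.cos_pi_sub] at this
    linarith
  · exact Real.cos_le_cos_of_nonneg_of_le_pi h0 (by linarith) h1

private lemma aux_cos (δ θ : ℝ) (h0 : 0 ≤ δ) (h1 : δ ≤ θ) (h2 : θ ≤ 2 * π - δ)
    (h3 : δ ≤ |θ - π|) : |Real.cos θ| ≤ Real.cos δ := by
  rcases le_or_gt θ π with hθ | hθ
  · have h4 : |θ - π| = π - θ := by rw [abs_of_nonpos (by linarith)]; ring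
    rw [h4] at h3
    exact aux_cos1 δ θ h0 h1 (by linarith)
  · have h4 : |θ - π| = θ - π := by rw [abs_of_nonneg (by linarith)]
    rw [h4] at h3
    have hc : |Real.cos θ| = |Real.cos (2 * π - θ)| := by rw [Real.cos_two_pi_sub]
    rw [hc]
    exact aux_cos1 δ (2 * π - θ) h0 (by linarith) (by linarith)

private lemma prim_sum (N : ℕ) (i : ℕ) :
    Complex.exp (2 * π * Complex.I * (i / N)) + (Complex.exp (2 * π * Complex.I * (i / N)))⁻¹
      = ((2 * Real.cos (2 * π * i / N) : ℝ) : ℂ) := by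
  have hz : (2 * π * Complex.I * (i / N)) = ((2 * π * i / N : ℝ) : ℂ) * Complex.I := by
    push_cast; ring
  rw [hz, ← Complex.exp_neg, ← neg_mul]
  have := Complex.two_cos (x := ((2 * π * i / N : ℝ) : ℂ))
  rw [← this, ← Complex.ofReal_cos]
  push_cast; ring

private lemma prim_root_abs_le (N : ℕ) (hN : 3 ≤ N) (ζ : ℂ) (hζ : IsPrimitiveRoot ζ N) :
    ‖ζ + ζ⁻¹‖
      ≤ if Even N then 2 * Real.cos (2 * π / N) else 2 * Real.cos (π / N) := by
  obtain ⟨i, hiN, hicop, rfl⟩ := (Complex.isPrimitiveRoot_iff ζ N (by omega)).mp hζ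
  rw [prim_sum N i, Complex.norm_real, Real.norm_eq_abs, abs_mul, abs_two]
  have hi1 : 1 ≤ i := by
    rcases Nat.eq_zero_or_pos i with h | h
    · subst h
      rw [Nat.coprime_zero_left] at hicop
      omega
    · exact h
  have hπ : (0:ℝ) < π := Real.pi_pos
  have hNR : (0:ℝ) < N := by positivity
  have hiR : (1:ℝ) ≤ (i:ℝ) := by exact_mod_cast hi1
  have hiNR : (i:ℝ) ≤ (N:ℝ) - 1 := by
    have : (i:ℝ) + 1 ≤ N := by exact_mod_cast hiN
    linarith
  have hθsub : |2 * π * i / N - π| = π * |2*(i:ℝ) - N| / N := by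
    have h : 2 * π * i / N - π = π * (2*(i:ℝ) - N)/N := by field_simp
    rw [h, abs_div, abs_mul, abs_of_pos hπ, abs_of_pos hNR]
  have key : ∀ δ : ℝ, 0 ≤ δ → δ * N ≤ 2 * π → δ * N ≤ π * |2*(i:ℝ) - N| →
      2 * |Real.cos (2 * π * i / N)| ≤ 2 * Real.cos δ := by
    intro δ hδ0 hδ2 hδ3
    have hb := aux_cos δ (2 * π * i / N) hδ0 ?_ ?_ ?_
    · linarith
    · rw [le_div_iff₀ hNR]
      nlinarith
    · rw [div_le_iff₀ hNR]
      nlinarith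
    · rw [hθsub, le_div_iff₀ hNR]
      exact hδ3
  have h2iN : 2 * i ≠ N := by
    intro h
    have hdvd : i ∣ N := ⟨2, by omega⟩
    have : i = 1 := Nat.Coprime.eq_one_of_dvd hicop hdvd
    omega
  by_cases hev : Even N
  · rw [if_pos hev]
    obtain ⟨k, hk⟩ := hev
    have hik : (i:ℤ) ≠ (k:ℤ) := by
      intro h
      apply h2iN
      have : i = k := by exact_mod_cast h
      omega
    have hd2 : (2:ℝ) ≤ |2*(i:ℝ) - N| := by
      have h1 : (2:ℤ) ≤ |2*(i:ℤ) - N| := by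
        have : 2*(i:ℤ) - N = 2*((i:ℤ) - k) := by
          have : (N:ℤ) = k + k := by exact_mod_cast hk
          rw [this]; ring
        rw [this, abs_mul, abs_two]
        have : 1 ≤ |(i:ℤ) - k| := Int.one_le_abs (sub_ne_zero.mpr hik)
        omega
      calc (2:ℝ) = ((2:ℤ):ℝ) := by norm_num
        _ ≤ (|2*(i:ℤ) - N| : ℝ) := by exact_mod_cast h1
        _ = |2*(i:ℝ) - N| := by push_cast; ring_nf
    apply key (2*π/N) (by positivity) (by rw [div_mul_cancel₀]; exact hNR.ne')
    rw [div_mul_cancel₀ _ hNR.ne']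
    nlinarith
  · rw [if_neg hev]
    have hNodd : N % 2 = 1 := Nat.odd_iff.mp (Nat.not_even_iff_odd.mp hev)
    have hd1 : (1:ℝ) ≤ |2*(i:ℝ) - N| := by
      have h1 : (1:ℤ) ≤ |2*(i:ℤ) - N| := by
        apply Int.one_le_abs
        intro h
        have h2 : 2*(i:ℤ) = N := by linarith
        have h3 : 2*i = N := by exact_mod_cast h2
        omega
      calc (1:ℝ) = ((1:ℤ):ℝ) := by norm_num
        _ ≤ (|2*(i:ℤ) - N| : ℝ) := by exact_mod_cast h1
        _ = |2*(i:ℝ) - N| := by push_cast; ring_nf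
    apply key (π/N) (by positivity) ?_ ?_
    · rw [div_mul_cancel₀ _ hNR.ne']
      nlinarith
    · rw [div_mul_cancel₀ _ hNR.ne']
      nlinarith


private lemma exists_prim_max (N : ℕ) (hN : 3 ≤ N) :
    ∃ ζ : ℂ, IsPrimitiveRoot ζ N ∧ ‖ζ + ζ⁻¹‖
      = if Even N then 2 * Real.cos (2 * π / N) else 2 * Real.cos (π / N) := by
  have hπ : (0:ℝ) < π := Real.pi_pos
  have hNR : (0:ℝ) < N := by positivity
  by_cases hev : Even N
  · have hN4 : 4 ≤ N := by
      obtain ⟨k, hk⟩ := hev; omega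
    refine ⟨Complex.exp (2 * π * Complex.I * ((1:ℕ) / N)),
      Complex.isPrimitiveRoot_exp_of_coprime 1 N (by omega) (Nat.coprime_one_left N), ?_⟩
    rw [prim_sum N 1, if_pos hev, Complex.norm_real, Real.norm_eq_abs]
    have h1 : 2 * π * (1:ℕ) / N = 2 * π / N := by norm_num
    have h4 : (4:ℝ) ≤ N := by exact_mod_cast hN4
    have hle : 2 * π / N ≤ π / 2 := by
      rw [div_le_div_iff₀ hNR (by norm_num)]
      nlinarith
    have hnn : (0:ℝ) ≤ 2 * π / N := by positivity
    have hcos := Real.cos_nonneg_of_mem_Icc (x := 2 * π / N)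
      ⟨by linarith, hle⟩
    rw [h1, abs_of_nonneg (by linarith)]
  · have hNodd : N % 2 = 1 := Nat.odd_iff.mp (Nat.not_even_iff_odd.mp hev)
    set m := (N - 1) / 2 with hm
    have h2m : 2 * m = N - 1 := by omega
    have hcop : m.Coprime N := by
      have h1 : (N - 1).Coprime N := by
        have h : N = (N-1) + 1 := by omega
        rw [h]
        simp [Nat.Coprime, Nat.gcd_comm]
      exact Nat.Coprime.coprime_dvd_left ⟨2, by omega⟩ h1
    refine ⟨Complex.exp (2 * π * Complex.I * ((m:ℕ) / N)),
      Complex.isPrimitiveRoot_exp_of_coprime m N (by omega) hcop, ?_⟩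
    rw [prim_sum N m, if_neg hev, Complex.norm_real, Real.norm_eq_abs]
    have hθ : 2 * π * m / N = π - π / N := by
      have hmR : (m:ℝ) * 2 = (N:ℝ) - 1 := by
        have : ((2 * m : ℕ) : ℝ) = ((N - 1 : ℕ) : ℝ) := by rw [h2m]
        push_cast [Nat.cast_sub (by omega : 1 ≤ N)] at this ⊢
        linarith
      field_simp
      nlinarith
    have h3 : (3:ℝ) ≤ N := by exact_mod_cast hN
    have hle : π / N ≤ π / 2 := by
      rw [div_le_div_iff₀ hNR (by norm_num)]
      nlinarith
    have hnn : (0:ℝ) ≤ π / N := by positivity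
    have hcos := Real.cos_nonneg_of_mem_Icc (x := π / N) ⟨by linarith, hle⟩
    rw [hθ, Real.cos_pi_sub, abs_of_nonpos (by linarith)]
    ring


/-- Let `P ∈ ℤ[X]` be a monic irreducible polynomial of degree `n ≥ 1` all of whose complex
roots are real of absolute value `< 2`. Then there is an `N ≥ 3` with
`z ^ n * P(z + 1/z) = Φ_N(z)` for all nonzero `z : ℂ`, every root of `P` has the form
`ζ + ζ⁻¹` for a primitive `N`-th root of unity `ζ`, and the maximal absolute value of the
roots of `P` is `2 cos (2π/N)` if `N` is even and `2 cos (π/N)` if `N` is odd. -/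
theorem kronecker_trace_cyclotomic (n : ℕ) (hn : 1 ≤ n) (P : Polynomial ℤ)
    (hmonic : P.Monic) (hirr : Irreducible P) (hdeg : P.natDegree = n)
    (hroots : ∀ z : ℂ, aeval z P = 0 → z.im = 0 ∧ ‖z‖ < 2) :
    ∃ N : ℕ, 3 ≤ N ∧
      (∀ z : ℂ, z ≠ 0 → z ^ n * aeval (z + z⁻¹) P = aeval z (cyclotomic N ℤ)) ∧
      (∀ z : ℂ, aeval z P = 0 → ∃ ζ : ℂ, IsPrimitiveRoot ζ N ∧ z = ζ + ζ⁻¹) ∧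
      IsGreatest {r : ℝ | ∃ z : ℂ, aeval z P = 0 ∧ ‖z‖ = r}
        (if Even N then 2 * Real.cos (2 * π / N) else 2 * Real.cos (π / N)) := by
  classical
  set Q := QQaux n P with hQdef
  have hQm := QQaux_monic n P
  have hQdeg := QQaux_natDegree n P
  have hQev : ∀ z : ℂ, z ≠ 0 → aeval z Q = z ^ n * aeval (z + z⁻¹) P :=
    fun z hz => QQaux_aeval n P hdeg hmonic z hz
  have hQ0 : aeval (0:ℂ) Q = 1 := by
    rw [hQdef, QQaux]
    simp only [map_add, map_pow, map_sum, map_mul, aeval_X, aeval_C, map_one]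
    rw [Finset.sum_eq_zero, add_zero]
    · norm_num
    · intro k hk
      rw [Finset.mem_range] at hk
      rw [zero_pow (by omega : n - k ≠ 0)]
      ring
  have hQroot0 : ∀ z : ℂ, aeval z Q = 0 → z ≠ 0 := by
    intro z hz h0
    rw [h0, hQ0] at hz
    exact one_ne_zero hz
  have hQshape : ∀ z : ℂ, aeval z Q = 0 →
      ‖z‖ = 1 ∧ z.im ≠ 0 ∧ aeval (z + z⁻¹) P = 0 := by
    intro z hz
    have hz0 := hQroot0 z hz
    have hPz : aeval (z + z⁻¹) P = 0 := by
      have h := hQev z hz0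
      rw [hz] at h
      rcases mul_eq_zero.mp h.symm with h1 | h1
      · exact absurd h1 (pow_ne_zero n hz0)
      · exact h1
    obtain ⟨him, habs⟩ := hroots _ hPz
    have hquad : z ^ 2 - (z + z⁻¹) * z + 1 = 0 := by field_simp; ring
    obtain ⟨h1, h2⟩ := quad_root_shape _ z him habs hquad
    exact ⟨h1, h2, hPz⟩
  have hQmapdeg : 0 < (Q.map (algebraMap ℤ ℂ)).degree := by
    rw [degree_eq_natDegree (hQm.map (algebraMap ℤ ℂ)).ne_zero, hQm.natDegree_map, hQdeg]
    exact_mod_cast (by omega : 0 < 2 * n)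
  obtain ⟨ζ, hζroot⟩ := Complex.exists_root hQmapdeg
  have hζQ : aeval ζ Q = 0 := by
    rw [aeval_def, eval₂_eq_eval_map]
    exact hζroot
  obtain ⟨hN0, hprim⟩ := kronecker_aux Q hQm (fun z hz => (hQshape z hz).1) ζ hζQ
  set N := orderOf ζ with hNdef
  have hζint : IsIntegral ℤ ζ := ⟨Q, hQm, by rwa [← aeval_def]⟩
  have hcyc : cyclotomic N ℤ = minpoly ℤ ζ := cyclotomic_eq_minpoly hprim hN0
  have hdvd : cyclotomic N ℤ ∣ Q := hcyc ▸ minpoly.isIntegrallyClosed_dvd hζint hζQ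
  obtain ⟨habs1, him, hPα⟩ := hQshape ζ hζQ
  have hζ0 : ζ ≠ 0 := hQroot0 ζ hζQ
  set α : ℂ := ζ + ζ⁻¹ with hαdef
  obtain ⟨hαim, hαabs⟩ := hroots α hPα
  have hPQ : Irreducible (P.map (algebraMap ℤ ℚ)) :=
    (hmonic.irreducible_iff_irreducible_map_fraction_map).mp hirr
  have hPmQ : (P.map (algebraMap ℤ ℚ)).Monic := hmonic.map _
  have hαrootQ : aeval α (P.map (algebraMap ℤ ℚ)) = 0 := by rwa [aeval_map_algebraMap]
  have hminα : P.map (algebraMap ℤ ℚ) = minpoly ℚ α :=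
    minpoly.eq_of_irreducible_of_monic hPQ hαrootQ hPmQ
  have hαint : IsIntegral ℚ α := ⟨_, hPmQ, by rwa [aeval_def] at hαrootQ⟩
  have hζintQ : IsIntegral ℚ ζ := hζint.tower_top
  have hEreal : ∀ x ∈ ℚ⟮α⟯, Complex.im x = 0 := by
    intro x hx
    have hle : ℚ⟮α⟯ ≤ realIF := IntermediateField.adjoin_simple_le_iff.mpr (mem_realIF hαim)
    exact realIF_im (hle hx)
  have hquadζ : ζ ^ 2 - α * ζ + 1 = 0 := by rw [hαdef]; field_simp; ring
  have h2 := finrank_two_aux ℚ⟮α⟯ hEreal α ζ (IntermediateField.mem_adjoin_simple_self ℚ α)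
    him hquadζ
  have hdeg2 := tower_aux α ζ hζ0 rfl hαint hζintQ h2
  have hminζ : cyclotomic N ℚ = minpoly ℚ ζ := cyclotomic_eq_minpoly_rat hprim hN0
  have htot : N.totient = 2 * n := by
    have h1 : (minpoly ℚ ζ).natDegree = N.totient := by
      rw [← hminζ, natDegree_cyclotomic]
    have h2' : (minpoly ℚ α).natDegree = n := by
      rw [← hminα, hmonic.natDegree_map, hdeg]
    omega
  have hQcyc : Q = cyclotomic N ℤ := by
    apply eq_of_monic_of_dvd_of_natDegree_le (cyclotomic.monic N ℤ) hQm hdvd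
    rw [hQdeg, natDegree_cyclotomic, htot]
  have hN3 : 3 ≤ N := by
    by_contra h
    have h1 : N.totient ≤ 1 := by
      interval_cases N <;> decide
    omega
  have hNC : NeZero ((N:ℂ)) := ⟨Nat.cast_ne_zero.mpr (by omega)⟩
  have hbul2 : ∀ z : ℂ, aeval z P = 0 → ∃ ξ : ℂ, IsPrimitiveRoot ξ N ∧ z = ξ + ξ⁻¹ := by
    intro z hz
    have hpdeg : 0 < degree ((X : Polynomial ℂ) ^ 2 - C z * X + 1) := by
      have : degree ((X : Polynomial ℂ) ^ 2 - C z * X + 1) = 2 := by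
        compute_degree!
      rw [this]
      norm_num
    obtain ⟨w, hw⟩ := Complex.exists_root hpdeg
    have hwe : w ^ 2 - z * w + 1 = 0 := by
      have := hw
      simp only [IsRoot, eval_add, eval_sub, eval_pow, eval_mul, eval_X, eval_C, eval_one] at this
      linear_combination this
    have hw0 : w ≠ 0 := by
      intro h
      rw [h] at hwe
      simp at hwe
    have hsum : w + w⁻¹ = z := by
      field_simp
      linear_combination hwe
    have hQw : aeval w Q = 0 := by
      rw [hQev w hw0, hsum, hz, mul_zero]
    have hwroot : IsRoot (cyclotomic N ℂ) w := by
      rw [hQcyc] at hQw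
      rw [IsRoot, ← map_cyclotomic N (algebraMap ℤ ℂ), ← eval₂_eq_eval_map, ← aeval_def]
      exact hQw
    exact ⟨w, isRoot_cyclotomic_iff.mp hwroot, hsum.symm⟩
  refine ⟨N, hN3, ?_, hbul2, ?_, ?_⟩
  · intro z hz
    rw [← hQcyc]
    exact (hQev z hz).symm
  · obtain ⟨ξ, hξprim, hξval⟩ := exists_prim_max N hN3
    have hξ0 : ξ ≠ 0 := by
      intro h
      have := hξprim.pow_eq_one
      rw [h] at this
      simp [zero_pow (by omega : N ≠ 0)] at this
    have hξQ : aeval ξ Q = 0 := by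
      rw [hQcyc]
      have hroot : IsRoot (cyclotomic N ℂ) ξ := isRoot_cyclotomic_iff.mpr hξprim
      rw [IsRoot, ← map_cyclotomic N (algebraMap ℤ ℂ), ← eval₂_eq_eval_map, ← aeval_def] at hroot
      exact hroot
    have hPξ : aeval (ξ + ξ⁻¹) P = 0 := by
      have h := hQev ξ hξ0
      rw [hξQ] at h
      rcases mul_eq_zero.mp h.symm with h1 | h1
      · exact absurd h1 (pow_ne_zero n hξ0)
      · exact h1
    exact ⟨ξ + ξ⁻¹, hPξ, hξval⟩
  · rintro r ⟨z, hzP, rfl⟩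
    obtain ⟨w, hwprim, rfl⟩ := hbul2 z hzP
    exact prim_root_abs_le N hN3 w hwprim
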